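/- If two Cauchy densities with parameter a are convolved, the result is a Cauchy density with parameter 2a: for all x ∈ ℝ, ∫_ℝ (1/π · a/(a²+(x−y)²)) · (1/π · a/(a²+y²)) dy = (1/π) · 2a/((2a)² + x²). -/

import Mathlib

open MeasureTheory Real Filter Topology

lemma tendsto_inv_atBot_zero'' : Tendsto (fun y : ℝ => y⁻¹) atBot (𝓝 0) := by
  have h := ((tendsto_inv_atTop_zero (𝕜 := ℝ)).comp tendsto_neg_atBot_atTop).neg
  simp only [Function.comp] at h
  rw [neg_zero] at h
  exact h.congr fun y => by rw [inv_neg, neg_neg]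

lemma integrable_cauchy_den (a : ℝ) (ha : 0 < a) :
    Integrable fun y : ℝ => (a ^ 2 + y ^ 2)⁻¹ := by
  have h0 : Integrable fun y : ℝ => (1 + (a⁻¹ * y) ^ 2)⁻¹ :=
    integrable_inv_one_add_sq.comp_mul_left' (inv_ne_zero ha.ne')
  have := h0.const_mul ((a ^ 2)⁻¹)
  refine this.congr (Eventually.of_forall fun y => ?_)
  have h1 : a ^ 2 + y ^ 2 > 0 := by positivity
  field_simp

lemma integrable_prod_den (a x : ℝ) (ha : 0 < a) :
    Integrable fun y : ℝ => ((a ^ 2 + (x - y) ^ 2) * (a ^ 2 + y ^ 2))⁻¹ := by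
  refine ((integrable_cauchy_den a ha).const_mul ((a ^ 2)⁻¹)).mono ?_ ?_
  · apply Continuous.aestronglyMeasurable
    have : ∀ y : ℝ, (a ^ 2 + (x - y) ^ 2) * (a ^ 2 + y ^ 2) ≠ 0 := by
      intro y; positivity
    exact (continuous_const.add ((continuous_const.sub continuous_id).pow 2)).mul
      (continuous_const.add (continuous_id.pow 2)) |>.inv₀ this
  · refine Eventually.of_forall fun y => ?_
    have h1 : (0:ℝ) < a ^ 2 + (x - y) ^ 2 := by positivity
    have h2 : (0:ℝ) < a ^ 2 + y ^ 2 := by positivity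
    rw [Real.norm_eq_abs, Real.norm_eq_abs, abs_of_pos (by positivity),
      abs_of_pos (by positivity), mul_inv]
    apply mul_le_mul_of_nonneg_right _ (by positivity)
    exact inv_anti₀ (by positivity) (by nlinarith)

lemma logratio_tendsto (a x : ℝ) (ha : 0 < a) (l : Filter ℝ)
    (hi : Tendsto (fun y : ℝ => y⁻¹) l (𝓝 0)) (hne : ∀ᶠ y in l, y ≠ 0) :
    Tendsto (fun y : ℝ => Real.log (a ^ 2 + y ^ 2) - Real.log (a ^ 2 + (x - y) ^ 2))
      l (𝓝 0) := by
  have hratio : Tendsto (fun y : ℝ =>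
      (a ^ 2 * (y⁻¹) ^ 2 + 1) / (a ^ 2 * (y⁻¹) ^ 2 + (x * y⁻¹ - 1) ^ 2)) l (𝓝 1) := by
    have hnum : Tendsto (fun y : ℝ => a ^ 2 * (y⁻¹) ^ 2 + 1) l (𝓝 1) := by
      have := ((hi.pow 2).const_mul (a ^ 2)).add_const 1
      simpa using this
    have hden : Tendsto (fun y : ℝ => a ^ 2 * (y⁻¹) ^ 2 + (x * y⁻¹ - 1) ^ 2) l (𝓝 1) := by
      have := ((hi.pow 2).const_mul (a ^ 2)).add (((hi.const_mul x).sub_const 1).pow 2)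
      simpa using this
    have := hnum.div hden one_ne_zero
    rw [div_one] at this
    exact this
  have hcomp : Tendsto (fun y : ℝ =>
      Real.log ((a ^ 2 * (y⁻¹) ^ 2 + 1) / (a ^ 2 * (y⁻¹) ^ 2 + (x * y⁻¹ - 1) ^ 2)))
      l (𝓝 0) := by
    have := (Real.continuousAt_log one_ne_zero).tendsto.comp hratio
    simpa [Real.log_one, Function.comp_def] using this
  refine Tendsto.congr' ?_ hcomp
  filter_upwards [hne] with y hy
  have h1 : (0:ℝ) < a ^ 2 + y ^ 2 := by positivity
  have h2 : (0:ℝ) < a ^ 2 + (x - y) ^ 2 := by positivity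
  have hd : a ^ 2 * (y⁻¹) ^ 2 + (x * y⁻¹ - 1) ^ 2 ≠ 0 := by
    have : a ^ 2 * (y⁻¹) ^ 2 > 0 := by positivity
    positivity
  rw [← Real.log_div h1.ne' h2.ne']
  congr 1
  field_simp

lemma arctan_div_tendsto_top (a : ℝ) (ha : 0 < a) (c : ℝ) :
    Tendsto (fun y : ℝ => Real.arctan ((y - c) / a)) atTop (𝓝 (π / 2)) := by
  have h1 : Tendsto (fun y : ℝ => (y - c) / a) atTop atTop :=
    (tendsto_atTop_add_const_right atTop (-c) tendsto_id).atTop_div_const ha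
      |>.congr (fun y => by simp [sub_eq_add_neg])
  exact tendsto_nhds_of_tendsto_nhdsWithin (Real.tendsto_arctan_atTop.comp h1)

lemma arctan_div_tendsto_bot (a : ℝ) (ha : 0 < a) (c : ℝ) :
    Tendsto (fun y : ℝ => Real.arctan ((y - c) / a)) atBot (𝓝 (-(π / 2))) := by
  have h1 : Tendsto (fun y : ℝ => (y - c) / a) atBot atBot :=
    (tendsto_atBot_add_const_right atBot (-c) tendsto_id).atBot_div_const ha
      |>.congr (fun y => by simp [sub_eq_add_neg])
  exact tendsto_nhds_of_tendsto_nhdsWithin (Real.tendsto_arctan_atBot.comp h1)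

lemma cauchy_key_integral (a x : ℝ) (ha : 0 < a) :
    ∫ y : ℝ, ((a ^ 2 + (x - y) ^ 2) * (a ^ 2 + y ^ 2))⁻¹
      = 2 * π / (a * (x ^ 2 + 4 * a ^ 2)) := by
  have hx4 : (0:ℝ) < x ^ 2 + 4 * a ^ 2 := by positivity
  by_cases hx : x = 0
  · subst hx
    -- antiderivative: y/(2a²(a²+y²)) + arctan(y/a)/(2a³)
    set F : ℝ → ℝ := fun y => y / (2 * a ^ 2 * (a ^ 2 + y ^ 2))
      + Real.arctan (y / a) / (2 * a ^ 3) with hF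
    have hderiv : ∀ y : ℝ, HasDerivAt F (((a ^ 2 + (0 - y) ^ 2) * (a ^ 2 + y ^ 2))⁻¹) y := by
      intro y
      have h1 : (0:ℝ) < a ^ 2 + y ^ 2 := by positivity
      have hd : HasDerivAt (fun y : ℝ => 2 * a ^ 2 * (a ^ 2 + y ^ 2))
          (2 * a ^ 2 * (2 * y)) y := by
        simpa using (((hasDerivAt_pow 2 y).const_add (a ^ 2)).const_mul (2 * a ^ 2))
      have hq := (hasDerivAt_id y).div hd (by positivity)
      have hat : HasDerivAt (fun y : ℝ => Real.arctan (y / a) / (2 * a ^ 3))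
          (((1 + (y / a) ^ 2)⁻¹ * (1 / a)) / (2 * a ^ 3)) y := by
        have := (Real.hasDerivAt_arctan (y / a)).comp y ((hasDerivAt_id y).div_const a)
        exact (by simpa [one_div, Function.comp_def] using this : HasDerivAt (fun y : ℝ => Real.arctan (y / a))
          ((1 + (y / a) ^ 2)⁻¹ * (1 / a)) y).div_const (2 * a ^ 3)
      have := hq.add hat
      refine this.congr_deriv ?_
      have h3 : 1 + (y / a) ^ 2 > 0 := by positivity
      simp only [id_eq]
      field_simp
      ring
    have htop : Tendsto F atTop (𝓝 (0 + (π / 2) / (2 * a ^ 3))) := by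
      apply Tendsto.add
      · have hi : Tendsto (fun y : ℝ => y⁻¹) atTop (𝓝 0) := tendsto_inv_atTop_zero
        have : Tendsto (fun y : ℝ => y⁻¹ * (2 * a ^ 2 * (a ^ 2 * (y⁻¹) ^ 2 + 1))⁻¹)
            atTop (𝓝 (0 * (2 * a ^ 2 * (a ^ 2 * 0 ^ 2 + 1))⁻¹)) := by
          apply hi.mul
          apply Tendsto.inv₀
          · exact (((hi.pow 2).const_mul (a ^ 2)).add_const 1).const_mul (2 * a ^ 2)
          · simp; positivity
        refine Tendsto.congr' ?_ (by simpa using this)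
        filter_upwards [eventually_gt_atTop (0:ℝ)] with y hy
        have hy' : y ≠ 0 := hy.ne'
        have h1 : (0:ℝ) < a ^ 2 + y ^ 2 := by positivity
        have : a ^ 2 * (y⁻¹) ^ 2 + 1 > 0 := by positivity
        field_simp
      · have := (arctan_div_tendsto_top a ha 0)
        simpa using this.div_const (2 * a ^ 3)
    have hbot : Tendsto F atBot (𝓝 (0 + (-(π / 2)) / (2 * a ^ 3))) := by
      apply Tendsto.add
      · have hi : Tendsto (fun y : ℝ => y⁻¹) atBot (𝓝 0) := tendsto_inv_atBot_zero''
        have : Tendsto (fun y : ℝ => y⁻¹ * (2 * a ^ 2 * (a ^ 2 * (y⁻¹) ^ 2 + 1))⁻¹)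
            atBot (𝓝 (0 * (2 * a ^ 2 * (a ^ 2 * 0 ^ 2 + 1))⁻¹)) := by
          apply hi.mul
          apply Tendsto.inv₀
          · exact (((hi.pow 2).const_mul (a ^ 2)).add_const 1).const_mul (2 * a ^ 2)
          · simp; positivity
        refine Tendsto.congr' ?_ (by simpa using this)
        filter_upwards [eventually_lt_atBot (0:ℝ)] with y hy
        have hy' : y ≠ 0 := hy.ne
        have h1 : (0:ℝ) < a ^ 2 + y ^ 2 := by positivity
        have : a ^ 2 * (y⁻¹) ^ 2 + 1 > 0 := by positivity
        field_simp
      · have := (arctan_div_tendsto_bot a ha 0)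
        simpa using this.div_const (2 * a ^ 3)
    rw [integral_of_hasDerivAt_of_tendsto hderiv (integrable_prod_den a 0 ha) hbot htop]
    field_simp
    ring
  · -- x ≠ 0
    set F : ℝ → ℝ := fun y =>
      (1 / (x * (x ^ 2 + 4 * a ^ 2))) *
        (Real.log (a ^ 2 + y ^ 2) - Real.log (a ^ 2 + (x - y) ^ 2)) +
      (1 / (a * (x ^ 2 + 4 * a ^ 2))) *
        (Real.arctan (y / a) + Real.arctan ((y - x) / a)) with hFdef
    have hderiv : ∀ y : ℝ, HasDerivAt F (((a ^ 2 + (x - y) ^ 2) * (a ^ 2 + y ^ 2))⁻¹) y := by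
      intro y
      have h1 : (0:ℝ) < a ^ 2 + y ^ 2 := by positivity
      have h2 : (0:ℝ) < a ^ 2 + (x - y) ^ 2 := by positivity
      have d1 : HasDerivAt (fun y : ℝ => a ^ 2 + y ^ 2) (2 * y) y := by
        simpa using (hasDerivAt_pow 2 y).const_add (a ^ 2)
      have d2 : HasDerivAt (fun y : ℝ => a ^ 2 + (x - y) ^ 2)
          (2 * (x - y) * (-1)) y := by
        have hs : HasDerivAt (fun y : ℝ => x - y) (-1) y := (hasDerivAt_id y).const_sub x
        simpa using (hs.pow 2).const_add (a ^ 2)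
      have dlog := (d1.log h1.ne').sub (d2.log h2.ne')
      have da1 : HasDerivAt (fun y : ℝ => Real.arctan (y / a))
          ((1 + (y / a) ^ 2)⁻¹ * (1 / a)) y := by
        have := (Real.hasDerivAt_arctan (y / a)).comp y ((hasDerivAt_id y).div_const a)
        simpa [one_div, Function.comp_def] using this
      have da2 : HasDerivAt (fun y : ℝ => Real.arctan ((y - x) / a))
          ((1 + ((y - x) / a) ^ 2)⁻¹ * (1 / a)) y := by
        have hsub : HasDerivAt (fun y : ℝ => (y - x) / a) (1 / a) y := by
          simpa using ((hasDerivAt_id y).sub_const x).div_const a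
        have := (Real.hasDerivAt_arctan ((y - x) / a)).comp y hsub
        simpa [one_div, Function.comp_def] using this
      have := ((dlog.const_mul (1 / (x * (x ^ 2 + 4 * a ^ 2)))).add
        ((da1.add da2).const_mul (1 / (a * (x ^ 2 + 4 * a ^ 2)))))
      refine this.congr_deriv ?_
      have h3 : 1 + (y / a) ^ 2 > 0 := by positivity
      have h4 : 1 + ((y - x) / a) ^ 2 > 0 := by positivity
      field_simp
      ring
    have htop : Tendsto F atTop
        (𝓝 ((1 / (x * (x ^ 2 + 4 * a ^ 2))) * 0 +
          (1 / (a * (x ^ 2 + 4 * a ^ 2))) * (π / 2 + π / 2))) := by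
      apply Tendsto.add
      · exact (logratio_tendsto a x ha atTop tendsto_inv_atTop_zero
          ((eventually_gt_atTop (0:ℝ)).mono fun y hy => hy.ne')).const_mul _
      · refine Tendsto.const_mul _ (Tendsto.add ?_ (arctan_div_tendsto_top a ha x))
        simpa using arctan_div_tendsto_top a ha 0
    have hbot : Tendsto F atBot
        (𝓝 ((1 / (x * (x ^ 2 + 4 * a ^ 2))) * 0 +
          (1 / (a * (x ^ 2 + 4 * a ^ 2))) * (-(π / 2) + -(π / 2)))) := by
      apply Tendsto.add
      · exact (logratio_tendsto a x ha atBot tendsto_inv_atBot_zero''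
          ((eventually_lt_atBot (0:ℝ)).mono fun y hy => hy.ne)).const_mul _
      · refine Tendsto.const_mul _ (Tendsto.add ?_ (arctan_div_tendsto_bot a ha x))
        simpa using arctan_div_tendsto_bot a ha 0
    rw [integral_of_hasDerivAt_of_tendsto hderiv (integrable_prod_den a x ha) hbot htop]
    field_simp
    ring

/-- The convolution of two Cauchy(a) densities is the Cauchy(2a) density. -/
theorem cauchy_conv_cauchy (a : ℝ) (ha : 0 < a) :
    ∀ x : ℝ,
      (∫ y : ℝ, (1 / Real.pi * (a / (a ^ 2 + (x - y) ^ 2))) *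
        (1 / Real.pi * (a / (a ^ 2 + y ^ 2)))) =
      (1 / Real.pi) * (2 * a / ((2 * a) ^ 2 + x ^ 2)) := by
  intro x
  have hpi : Real.pi ≠ 0 := Real.pi_ne_zero
  have hx4 : (0:ℝ) < x ^ 2 + 4 * a ^ 2 := by positivity
  have heq : ∀ y : ℝ, (1 / Real.pi * (a / (a ^ 2 + (x - y) ^ 2))) *
      (1 / Real.pi * (a / (a ^ 2 + y ^ 2)))
      = (a ^ 2 / Real.pi ^ 2) * ((a ^ 2 + (x - y) ^ 2) * (a ^ 2 + y ^ 2))⁻¹ := by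
    intro y
    have h1 : (0:ℝ) < a ^ 2 + y ^ 2 := by positivity
    have h2 : (0:ℝ) < a ^ 2 + (x - y) ^ 2 := by positivity
    field_simp
  simp_rw [heq]
  rw [integral_const_mul, cauchy_key_integral a x ha]
  field_simp
  ring
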